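/- Let 0 < α < 1. There exists a constant C > 0 depending only on α such that for every integer n ≥ 1: ∑_{j=0}^{n−1} (n−j)^{α−1} (j+1)^{−α−1} ≤ C n^{α−1}. -/

import Mathlib

open Finset Real

lemma mvt_rpow (α : ℝ) (hα : 0 < α) (hα1 : α < 1) (x : ℝ) (hx : 1 ≤ x) :
    α * x ^ (α - 1) ≤ x ^ α - (x - 1) ^ α := by
  have hab : x - 1 < x := by linarith
  have hfc : ContinuousOn (fun t : ℝ => t ^ α) (Set.Icc (x - 1) x) := fun t _ =>
    (Real.continuousAt_rpow_const t α (Or.inr hα.le)).continuousWithinAt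
  have hff' : ∀ t ∈ Set.Ioo (x - 1) x, HasDerivAt (fun t : ℝ => t ^ α) (α * t ^ (α - 1)) t := by
    intro t ht
    exact Real.hasDerivAt_rpow_const (Or.inl (by nlinarith [ht.1, ht.2]))
  obtain ⟨c, hc, hceq⟩ := exists_hasDerivAt_eq_slope (fun t : ℝ => t ^ α)
    (fun t => α * t ^ (α - 1)) hab hfc hff'
  have hc0 : 0 < c := by nlinarith [hc.1]
  have h1 : x ^ (α - 1) ≤ c ^ (α - 1) :=
    Real.rpow_le_rpow_of_nonpos hc0 hc.2.le (by linarith)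
  have : α * c ^ (α - 1) = x ^ α - (x - 1) ^ α := by
    rw [hceq]; field_simp; ring
  nlinarith [h1]

lemma sum_rpow_le (α : ℝ) (hα : 0 < α) (hα1 : α < 1) (n : ℕ) :
    ∑ j ∈ Finset.range n, ((j : ℝ) + 1) ^ (α - 1) ≤ (n : ℝ) ^ α / α := by
  induction n with
  | zero => simp [Real.zero_rpow (ne_of_gt hα)]
  | succ n ih =>
    rw [Finset.sum_range_succ]
    have h := mvt_rpow α hα hα1 ((n : ℝ) + 1) (by simp [Nat.cast_nonneg] : (1:ℝ) ≤ (n:ℝ)+1)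
    have heq : ((n : ℝ) + 1) - 1 = (n : ℝ) := by ring
    rw [heq] at h
    push_cast
    have ih' := (le_div_iff₀ hα).mp ih
    rw [le_div_iff₀ hα]
    nlinarith [h]

/-- Discrete fractional integral bound for the BDF(p)-CQ truncation error with `p ≥ 2`:
for `0 < α < 1` there is `C > 0` (depending only on `α`) such that
`∑_{j=0}^{n−1} (n−j)^{α−1} (j+1)^{−α−1} ≤ C n^{α−1}` for all `n ≥ 1`. -/
theorem discrete_frac_integral_bdf2 (α : ℝ) (hα : 0 < α) (hα1 : α < 1) :
    ∃ C : ℝ, 0 < C ∧ ∀ n : ℕ, 1 ≤ n →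
      ∑ j ∈ Finset.range n, ((n - j : ℕ) : ℝ) ^ (α - 1) * ((j : ℝ) + 1) ^ (-α - 1) ≤
        C * (n : ℝ) ^ (α - 1) := by
  have hsum : Summable (fun j : ℕ => ((j : ℝ) + 1) ^ (-α - 1)) := by
    have h1 : Summable (fun j : ℕ => ((j : ℝ)) ^ (-α - 1)) :=
      Real.summable_nat_rpow.mpr (by linarith)
    have h2 := (summable_nat_add_iff 1).mpr h1
    exact h2.congr (fun j => by push_cast; ring_nf)
  set T : ℝ := ∑' j : ℕ, ((j : ℝ) + 1) ^ (-α - 1) with hT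
  have hT0 : 0 ≤ T := tsum_nonneg fun j => Real.rpow_nonneg (by positivity) _
  have hCpos : (0:ℝ) < 2 ^ (1 - α) * T + 2 ^ (α + 1) / α := by
    have h1 : (0:ℝ) < 2 ^ (α + 1) / α := by positivity
    have h2 : (0:ℝ) ≤ 2 ^ (1 - α) * T :=
      mul_nonneg (Real.rpow_nonneg (by norm_num) _) hT0
    linarith
  refine ⟨2 ^ (1 - α) * T + 2 ^ (α + 1) / α, hCpos, ?_⟩
  intro n hn
  have hN : (1 : ℝ) ≤ (n : ℝ) := by exact_mod_cast hn
  have hN0 : (0 : ℝ) < n := by linarith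
  have h2 : (0 : ℝ) < (n : ℝ) / 2 := by linarith
  -- pointwise bound
  have step1 : ∀ j ∈ Finset.range n,
      ((n - j : ℕ) : ℝ) ^ (α - 1) * ((j : ℝ) + 1) ^ (-α - 1) ≤
        ((n : ℝ) / 2) ^ (α - 1) * ((j : ℝ) + 1) ^ (-α - 1) +
        ((n - j : ℕ) : ℝ) ^ (α - 1) * ((n : ℝ) / 2) ^ (-α - 1) := by
    intro j hj
    have hjn : j < n := Finset.mem_range.mp hj
    have ha1 : (1 : ℝ) ≤ ((n - j : ℕ) : ℝ) := by
      have : 1 ≤ n - j := by omega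
      exact_mod_cast this
    have hb1 : (1 : ℝ) ≤ (j : ℝ) + 1 := by have := Nat.cast_nonneg (α := ℝ) j; linarith
    have hab : ((n - j : ℕ) : ℝ) + ((j : ℝ) + 1) = (n : ℝ) + 1 := by
      have : ((n - j : ℕ) : ℝ) = (n : ℝ) - (j : ℝ) := by
        rw [Nat.cast_sub hjn.le]
      rw [this]; ring
    rcases le_or_gt ((n : ℝ) / 2) ((n - j : ℕ) : ℝ) with hcase | hcase
    · have h1 : ((n - j : ℕ) : ℝ) ^ (α - 1) ≤ ((n : ℝ) / 2) ^ (α - 1) :=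
        Real.rpow_le_rpow_of_nonpos h2 hcase (by linarith)
      have h2' : (0 : ℝ) ≤ ((n - j : ℕ) : ℝ) ^ (α - 1) * ((n : ℝ) / 2) ^ (-α - 1) := by
        positivity
      have h3 : (0 : ℝ) ≤ ((j : ℝ) + 1) ^ (-α - 1) := Real.rpow_nonneg (by positivity) _
      nlinarith [mul_le_mul_of_nonneg_right h1 h3]
    · have hb : ((n : ℝ) / 2) ≤ (j : ℝ) + 1 := by linarith
      have h1 : ((j : ℝ) + 1) ^ (-α - 1) ≤ ((n : ℝ) / 2) ^ (-α - 1) :=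
        Real.rpow_le_rpow_of_nonpos h2 hb (by linarith)
      have h2' : (0 : ℝ) ≤ ((n : ℝ) / 2) ^ (α - 1) * ((j : ℝ) + 1) ^ (-α - 1) := by
        positivity
      have h3 : (0 : ℝ) ≤ ((n - j : ℕ) : ℝ) ^ (α - 1) := Real.rpow_nonneg (by positivity) _
      nlinarith [mul_le_mul_of_nonneg_left h1 h3]
  have hS1 : ∑ j ∈ Finset.range n, ((j : ℝ) + 1) ^ (-α - 1) ≤ T :=
    hsum.sum_le_tsum (Finset.range n) (fun j _ => Real.rpow_nonneg (by positivity) _)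
  have hS2eq : ∑ j ∈ Finset.range n, ((n - j : ℕ) : ℝ) ^ (α - 1)
      = ∑ j ∈ Finset.range n, ((j : ℝ) + 1) ^ (α - 1) := by
    rw [← Finset.sum_range_reflect (fun k => ((k : ℝ) + 1) ^ (α - 1)) n]
    refine Finset.sum_congr rfl fun j hj => ?_
    have hjn : j < n := Finset.mem_range.mp hj
    have : n - j = (n - 1 - j) + 1 := by omega
    rw [this]; push_cast; ring_nf
  have hS2 : ∑ j ∈ Finset.range n, ((n - j : ℕ) : ℝ) ^ (α - 1) ≤ (n : ℝ) ^ α / α := by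
    rw [hS2eq]; exact sum_rpow_le α hα hα1 n
  calc ∑ j ∈ Finset.range n, ((n - j : ℕ) : ℝ) ^ (α - 1) * ((j : ℝ) + 1) ^ (-α - 1)
      ≤ ∑ j ∈ Finset.range n, (((n : ℝ) / 2) ^ (α - 1) * ((j : ℝ) + 1) ^ (-α - 1) +
          ((n - j : ℕ) : ℝ) ^ (α - 1) * ((n : ℝ) / 2) ^ (-α - 1)) :=
        Finset.sum_le_sum step1
    _ = ((n : ℝ) / 2) ^ (α - 1) * (∑ j ∈ Finset.range n, ((j : ℝ) + 1) ^ (-α - 1)) +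
        (∑ j ∈ Finset.range n, ((n - j : ℕ) : ℝ) ^ (α - 1)) * ((n : ℝ) / 2) ^ (-α - 1) := by
        rw [Finset.sum_add_distrib, Finset.mul_sum, Finset.sum_mul]
    _ ≤ ((n : ℝ) / 2) ^ (α - 1) * T + ((n : ℝ) ^ α / α) * ((n : ℝ) / 2) ^ (-α - 1) := by
        gcongr <;> positivity
    _ ≤ (2 ^ (1 - α) * T + 2 ^ (α + 1) / α) * (n : ℝ) ^ (α - 1) := by
        have e1 : ((n : ℝ) / 2) ^ (α - 1) = 2 ^ (1 - α) * (n : ℝ) ^ (α - 1) := by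
          rw [Real.div_rpow hN0.le (by norm_num), div_eq_mul_inv, ← Real.rpow_neg (by norm_num)]
          rw [show -(α - 1) = 1 - α by ring]; ring
        have e2 : ((n : ℝ) / 2) ^ (-α - 1) = 2 ^ (α + 1) * (n : ℝ) ^ (-α - 1) := by
          rw [Real.div_rpow hN0.le (by norm_num), div_eq_mul_inv, ← Real.rpow_neg (by norm_num)]
          rw [show -(-α - 1) = α + 1 by ring]; ring
        have e3 : (n : ℝ) ^ α * (n : ℝ) ^ (-α - 1) = (n : ℝ) ^ (-1 : ℝ) := by
          rw [← Real.rpow_add hN0]; ring_nf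
        have e4 : (n : ℝ) ^ (-1 : ℝ) ≤ (n : ℝ) ^ (α - 1) :=
          Real.rpow_le_rpow_of_exponent_le hN (by linarith)
        rw [e1, e2]
        have h5 : ((n : ℝ) ^ α / α) * (2 ^ (α + 1) * (n : ℝ) ^ (-α - 1))
            = (2 ^ (α + 1) / α) * (n : ℝ) ^ (-1 : ℝ) := by
          rw [← e3]; ring
        rw [h5]
        have hc : (0 : ℝ) < 2 ^ (α + 1) / α := by positivity
        nlinarith [mul_le_mul_of_nonneg_left e4 hc.le]
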